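/- arXiv:1702.01679 — 2 statements merged into one kernel-verified Lean document; each statement's English description precedes it below -/
import Mathlib

section
/- Let $X \sim$ Gamma$(N, 1)$ with $N \in \mathbb{N}_{\ge 1}$ and let $I \ge 0$ be an independent nonnegative random variable with Laplace transform $\mathcal{L}_I(s) = \mathbb{E}[e^{-sI}]$ finite and $N-1$ times differentiable on $(0,\infty)$. Then for every $s > 0$, $\mathbb{P}(X > sI) = \sum_{n=0}^{N-1} \frac{s^n(-1)^n}{n!} \mathcal{L}_I^{(n)}(s)$, where $\mathcal{L}_I^{(n)}$ denotes the $n$-th derivative. -/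
open MeasureTheory ProbabilityTheory Real
open Set

lemma hasDerivAt_exp_sum (N : ℕ) (hN : 1 ≤ N) (x : ℝ) :
    HasDerivAt (fun y : ℝ => Real.exp (-y) * ∑ n ∈ Finset.range N, y ^ n / n.factorial)
      (-(Real.exp (-x) * x ^ (N - 1) / (N - 1).factorial)) x := by
  induction N, hN using Nat.le_induction with
  | base =>
      simpa using ((Real.hasDerivAt_exp (-x)).comp x (hasDerivAt_neg x)).mul_const (1:ℝ) |>.congr_deriv (by simp)
  | succ N hN ih =>
      have h1 : HasDerivAt (fun y : ℝ => Real.exp (-y) * (y ^ N / N.factorial))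
          (-(Real.exp (-x)) * (x ^ N / N.factorial)
            + Real.exp (-x) * (N * x ^ (N - 1) / N.factorial)) x := by
        have he : HasDerivAt (fun y : ℝ => Real.exp (-y)) (-(Real.exp (-x))) x := by
          simpa [Function.comp_def] using (Real.hasDerivAt_exp (-x)).comp x (hasDerivAt_neg x)
        have hp : HasDerivAt (fun y : ℝ => y ^ N / N.factorial)
            ((N : ℝ) * x ^ (N - 1) / N.factorial) x :=
          (hasDerivAt_pow N x).div_const _
        exact he.mul hp
      have key : HasDerivAt
          (fun y : ℝ => Real.exp (-y) * ∑ n ∈ Finset.range N, y ^ n / n.factorial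
            + Real.exp (-y) * (y ^ N / N.factorial))
          (-(Real.exp (-x) * x ^ N / N.factorial)) x := by
        have := ih.add h1
        refine this.congr_deriv ?_
        have hN' : N - 1 + 1 = N := Nat.succ_pred_eq_of_pos hN
        have hfac : (N.factorial : ℝ) = N * (N - 1).factorial := by
          rw [← hN', Nat.factorial_succ]; push_cast; ring
        have hNne : (N : ℝ) ≠ 0 := by positivity
        field_simp [hfac]
        rw [hfac]
        ring
      have heq : (fun y : ℝ => Real.exp (-y) * ∑ n ∈ Finset.range (N+1), y ^ n / n.factorial)
          = fun y : ℝ => Real.exp (-y) * ∑ n ∈ Finset.range N, y ^ n / n.factorial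
            + Real.exp (-y) * (y ^ N / N.factorial) := by
        funext y; rw [Finset.sum_range_succ]; ring
      rw [heq]
      simpa [Nat.add_sub_cancel] using key

lemma exp_sum_tendsto (N : ℕ) :
    Filter.Tendsto (fun y : ℝ => Real.exp (-y) * ∑ n ∈ Finset.range N, y ^ n / n.factorial)
      Filter.atTop (nhds 0) := by
  have : (fun y : ℝ => Real.exp (-y) * ∑ n ∈ Finset.range N, y ^ n / n.factorial)
      = fun y : ℝ => ∑ n ∈ Finset.range N, (y ^ n * Real.exp (-y)) / n.factorial := by
    funext y; rw [Finset.mul_sum]; congr 1; funext n; ring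
  rw [this]
  have h0 : (0 : ℝ) = ∑ n ∈ Finset.range N, (0 : ℝ) / n.factorial := by simp
  rw [h0]
  exact tendsto_finset_sum _ fun n _ =>
    (Real.tendsto_pow_mul_exp_neg_atTop_nhds_zero n).div_const _

lemma integral_gamma_tail (N : ℕ) (hN : 1 ≤ N) {t : ℝ} (ht : 0 ≤ t) :
    (∫ x in Ioi t, Real.exp (-x) * x ^ (N - 1) / (N - 1).factorial)
      = Real.exp (-t) * ∑ n ∈ Finset.range N, t ^ n / n.factorial ∧
    IntegrableOn (fun x => Real.exp (-x) * x ^ (N - 1) / (N - 1).factorial) (Ioi t) := by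
  have hderiv : ∀ x ∈ Ici t, HasDerivAt
      (fun y : ℝ => -(Real.exp (-y) * ∑ n ∈ Finset.range N, y ^ n / n.factorial))
      (Real.exp (-x) * x ^ (N - 1) / (N - 1).factorial) x := by
    intro x _
    exact (hasDerivAt_exp_sum N hN x).neg.congr_deriv (by ring)
  have hpos : ∀ x ∈ Ioi t, 0 ≤ Real.exp (-x) * x ^ (N - 1) / (N - 1).factorial := by
    intro x hx
    have : (0:ℝ) ≤ x := le_trans ht (le_of_lt hx)
    positivity
  have htd : Filter.Tendsto
      (fun y : ℝ => -(Real.exp (-y) * ∑ n ∈ Finset.range N, y ^ n / n.factorial))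
      Filter.atTop (nhds 0) := by
    simpa using (exp_sum_tendsto N).neg
  constructor
  · have := integral_Ioi_of_hasDerivAt_of_nonneg' hderiv hpos htd
    rw [this]; ring
  · exact integrableOn_Ioi_deriv_of_nonneg' hderiv hpos htd

lemma gamma_ccdf (N : ℕ) (hN : 1 ≤ N) {t : ℝ} (ht : 0 ≤ t) :
    gammaMeasure N 1 (Ioi t)
      = ENNReal.ofReal (Real.exp (-t) * ∑ n ∈ Finset.range N, t ^ n / n.factorial) := by
  rw [gammaMeasure, withDensity_apply _ measurableSet_Ioi]
  have hcast : ((N : ℝ)) - 1 = ((N - 1 : ℕ) : ℝ) := by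
    push_cast [Nat.cast_sub hN]; ring
  have hpdf : ∀ x ∈ Ioi t, gammaPDF N 1 x
      = ENNReal.ofReal (Real.exp (-x) * x ^ (N - 1) / (N - 1).factorial) := by
    intro x hx
    have hx0 : (0:ℝ) ≤ x := le_trans ht (le_of_lt hx)
    rw [gammaPDF_of_nonneg hx0]
    congr 1
    rw [hcast, Real.rpow_natCast]
    have hG : Real.Gamma (N : ℝ) = (N - 1).factorial := by
      have : ((N : ℝ)) = ((N - 1 : ℕ) : ℝ) + 1 := by rw [← hcast]; ring
      rw [this, Real.Gamma_nat_eq_factorial]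
    rw [hG]
    simp [Real.one_rpow]
    ring
  rw [setLIntegral_congr_fun measurableSet_Ioi hpdf]
  rw [← ofReal_integral_eq_lintegral_ofReal ((integral_gamma_tail N hN ht).2)
    ((ae_restrict_iff' measurableSet_Ioi).mpr (Filter.Eventually.of_forall fun x hx => by
      have hx0 : (0:ℝ) ≤ x := le_trans ht (le_of_lt hx); positivity))]
  rw [(integral_gamma_tail N hN ht).1]

lemma pow_mul_exp_le_aux (k : ℕ) {y c : ℝ} (hy : 0 ≤ y) (hc : 0 < c) :
    y ^ k * Real.exp (-c * y) ≤ (k.factorial * (2 / c) ^ k) * Real.exp (-(c / 2) * y) := by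
  have h1 : ((c / 2) * y) ^ k / (k.factorial : ℝ) ≤ Real.exp ((c / 2) * y) :=
    Real.pow_div_factorial_le_exp _ (by positivity : (0:ℝ) ≤ (c/2)*y) k
  have h1' : ((c / 2) * y) ^ k ≤ (k.factorial : ℝ) * Real.exp ((c / 2) * y) := by
    rw [div_le_iff₀ (by positivity : (0:ℝ) < (k.factorial:ℝ))] at h1
    linarith [h1]
  have h2 : y ^ k ≤ (k.factorial * (2 / c) ^ k) * Real.exp ((c / 2) * y) := by
    have hy' : y ^ k = ((c / 2) * y) ^ k * (2 / c) ^ k := by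
      rw [← mul_pow]
      congr 1
      field_simp
    rw [hy']
    calc ((c / 2) * y) ^ k * (2 / c) ^ k
        ≤ ((k.factorial : ℝ) * Real.exp ((c / 2) * y)) * (2 / c) ^ k :=
          mul_le_mul_of_nonneg_right h1' (by positivity)
      _ = (k.factorial * (2 / c) ^ k) * Real.exp ((c / 2) * y) := by ring
  calc y ^ k * Real.exp (-c * y)
      ≤ ((k.factorial * (2 / c) ^ k) * Real.exp ((c / 2) * y)) * Real.exp (-c * y) :=
        mul_le_mul_of_nonneg_right h2 (Real.exp_nonneg _)
    _ = (k.factorial * (2 / c) ^ k) * Real.exp (-(c / 2) * y) := by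
        rw [mul_assoc, ← Real.exp_add]; congr 2; ring

lemma integrable_pow_mul_exp {Ω : Type*} [MeasureSpace Ω]
    (I : Ω → ℝ) (hI : Measurable I) (hInn : ∀ ω, 0 ≤ I ω)
    (hLint : ∀ s : ℝ, 0 < s → Integrable (fun ω => Real.exp (-s * I ω)))
    (k : ℕ) {s : ℝ} (hs : 0 < s) :
    Integrable (fun ω => I ω ^ k * Real.exp (-s * I ω)) := by
  have hb := ((hLint (s/2) (by positivity)).const_mul (k.factorial * (2/s)^k))
  refine hb.mono ?_ (Filter.Eventually.of_forall fun ω => ?_)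
  · exact ((hI.pow_const k).mul ((hI.const_mul (-s)).exp)).aestronglyMeasurable
  · have h0 : (0:ℝ) ≤ I ω ^ k * Real.exp (-s * I ω) := by
      have := hInn ω; positivity
    rw [Real.norm_eq_abs, Real.norm_eq_abs, abs_of_nonneg h0, abs_of_nonneg (by positivity)]
    have := pow_mul_exp_le_aux k (hInn ω) hs
    simpa [neg_div] using this

lemma hasDerivAt_g {Ω : Type*} [MeasureSpace Ω]
    (I : Ω → ℝ) (hI : Measurable I) (hInn : ∀ ω, 0 ≤ I ω)
    (hLint : ∀ s : ℝ, 0 < s → Integrable (fun ω => Real.exp (-s * I ω)))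
    (n : ℕ) {s : ℝ} (hs : 0 < s) :
    HasDerivAt (fun u : ℝ => ∫ ω, (-I ω) ^ n * Real.exp (-u * I ω))
      (∫ ω, (-I ω) ^ (n + 1) * Real.exp (-s * I ω)) s := by
  set F : ℝ → Ω → ℝ := fun u ω => (-I ω) ^ n * Real.exp (-u * I ω) with hF
  set F' : ℝ → Ω → ℝ := fun u ω => (-I ω) ^ (n + 1) * Real.exp (-u * I ω) with hF'
  have hmeas : ∀ u : ℝ, ∀ k : ℕ, AEStronglyMeasurable (fun ω => (-I ω) ^ k * Real.exp (-u * I ω)) ℙ :=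
    fun u k => ((hI.neg.pow_const k).mul ((hI.const_mul (-u)).exp)).aestronglyMeasurable
  have hFint : ∀ u : ℝ, 0 < u → ∀ k : ℕ, Integrable (fun ω => (-I ω) ^ k * Real.exp (-u * I ω)) := by
    intro u hu k
    have h := integrable_pow_mul_exp I hI hInn hLint k hu
    refine (h.abs.mono (hmeas u k) (Filter.Eventually.of_forall fun ω => ?_))
    have h0 : (0:ℝ) ≤ I ω := hInn ω
    rw [Real.norm_eq_abs, Real.norm_eq_abs, abs_abs, abs_mul, abs_pow, abs_neg,
      abs_of_nonneg h0, abs_of_nonneg (Real.exp_nonneg _), abs_of_nonneg (by positivity)]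
  have key := hasDerivAt_integral_of_dominated_loc_of_deriv_le
    (F := F) (F' := F') (x₀ := s) (s := Metric.ball s (s / 2)) (bound := fun ω =>
      ((n+1).factorial * (2 / (s/2)) ^ (n+1)) * Real.exp (-(s/4) * I ω))
    (Metric.ball_mem_nhds _ (by positivity))
    (Filter.Eventually.of_forall fun u => hmeas u n)
    (hFint s hs n)
    (hmeas s (n+1))
    (Filter.Eventually.of_forall fun ω => fun u hu => ?_)
    ((hLint (s/4) (by positivity)).const_mul _)
    (Filter.Eventually.of_forall fun ω => fun u hu => ?_)
  · exact key.2
  · -- bound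
    have h0 : (0:ℝ) ≤ I ω := hInn ω
    have hus : s / 2 < u := by
      have := abs_lt.mp (by simpa [Real.dist_eq] using Metric.mem_ball.mp hu)
      linarith [this.1]
    have step1 : ‖F' u ω‖ = I ω ^ (n+1) * Real.exp (-u * I ω) := by
      rw [hF', Real.norm_eq_abs, abs_mul, abs_pow, abs_neg, abs_of_nonneg h0,
        abs_of_nonneg (Real.exp_nonneg _)]
    rw [step1]
    have hmono : Real.exp (-u * I ω) ≤ Real.exp (-(s/2) * I ω) := by
      apply Real.exp_le_exp.mpr
      nlinarith
    calc I ω ^ (n+1) * Real.exp (-u * I ω)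
        ≤ I ω ^ (n+1) * Real.exp (-(s/2) * I ω) :=
          mul_le_mul_of_nonneg_left hmono (by positivity)
      _ ≤ ((n+1).factorial * (2 / (s/2)) ^ (n+1)) * Real.exp (-((s/2)/2) * I ω) :=
          pow_mul_exp_le_aux (n+1) h0 (by positivity)
      _ = ((n+1).factorial * (2 / (s/2)) ^ (n+1)) * Real.exp (-(s/4) * I ω) := by
          congr 2
          ring
  · -- differentiability
    have hd : HasDerivAt (fun u : ℝ => Real.exp (-u * I ω)) (-I ω * Real.exp (-u * I ω)) u := by
      have h1 : HasDerivAt (fun v : ℝ => -v * I ω) (-I ω) u := by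
        simpa using ((hasDerivAt_id u).neg.mul_const (I ω))
      simpa [mul_comm, Function.comp_def] using (Real.hasDerivAt_exp (-u * I ω)).comp u h1
    have := hd.const_mul ((-I ω) ^ n)
    refine this.congr_deriv ?_
    rw [hF']
    beta_reduce
    ring

lemma iterated_eq_g {Ω : Type*} [MeasureSpace Ω]
    (I : Ω → ℝ) (hI : Measurable I) (hInn : ∀ ω, 0 ≤ I ω)
    (hLint : ∀ s : ℝ, 0 < s → Integrable (fun ω => Real.exp (-s * I ω)))
    (L : ℝ → ℝ) (hL : L = fun s => ∫ ω, Real.exp (-s * I ω)) (n : ℕ) :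
    ∀ s : ℝ, 0 < s → iteratedDerivWithin n L (Set.Ioi 0) s
      = ∫ ω, (-I ω) ^ n * Real.exp (-s * I ω) := by
  induction n with
  | zero => intro s hs; simp [hL]
  | succ n ih =>
      intro s hs
      rw [iteratedDerivWithin_succ,
        derivWithin_of_isOpen isOpen_Ioi hs]
      have hev : iteratedDerivWithin n L (Set.Ioi 0)
          =ᶠ[nhds s] fun u => ∫ ω, (-I ω) ^ n * Real.exp (-u * I ω) :=
        Filter.eventuallyEq_of_mem (isOpen_Ioi.mem_nhds hs) fun u hu => ih u hu
      rw [hev.deriv_eq]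
      exact (hasDerivAt_g I hI hInn hLint n hs).deriv

theorem gamma_coverage_alternating_sum
    {Ω : Type*} [MeasureSpace Ω] [IsProbabilityMeasure (ℙ : Measure Ω)]
    (N : ℕ) (hN : 1 ≤ N) (X I : Ω → ℝ)
    (hX : Measurable X) (hI : Measurable I)
    (hXlaw : Measure.map X ℙ = gammaMeasure N 1)
    (hInn : ∀ ω, 0 ≤ I ω)
    (hindep : IndepFun X I)
    (L : ℝ → ℝ) (hL : L = fun s => ∫ ω, Real.exp (-s * I ω))
    (hLint : ∀ s : ℝ, 0 < s → Integrable (fun ω => Real.exp (-s * I ω)))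
    (hLdiff : ContDiffOn ℝ (N - 1 : ℕ) L (Set.Ioi 0)) :
    ∀ s : ℝ, 0 < s →
      (ℙ {ω | s * I ω < X ω}).toReal =
        ∑ n ∈ Finset.range N,
          s ^ n * (-1 : ℝ) ^ n / (Nat.factorial n) *
            iteratedDerivWithin n L (Set.Ioi 0) s := by
  intro s hs
  have hint : ∀ n : ℕ, Integrable (fun ω => s ^ n / n.factorial * (I ω ^ n * Real.exp (-s * I ω))) :=
    fun n => (integrable_pow_mul_exp I hI hInn hLint n hs).const_mul _
  -- pointwise identity
  have hpt : ∀ ω, Real.exp (-(s * I ω)) * ∑ n ∈ Finset.range N, (s * I ω) ^ n / n.factorial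
      = ∑ n ∈ Finset.range N, s ^ n / n.factorial * (I ω ^ n * Real.exp (-s * I ω)) := by
    intro ω
    rw [Finset.mul_sum]
    refine Finset.sum_congr rfl fun n _ => ?_
    rw [mul_pow, neg_mul]
    ring
  -- LHS
  have hLHS : (ℙ {ω | s * I ω < X ω}).toReal
      = ∫ ω, ∑ n ∈ Finset.range N, s ^ n / n.factorial * (I ω ^ n * Real.exp (-s * I ω)) := by
    have hm : Measurable fun ω => (I ω, X ω) := hI.prodMk hX
    have hE : MeasurableSet {p : ℝ × ℝ | s * p.1 < p.2} :=
      measurableSet_lt (measurable_fst.const_mul s) measurable_snd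
    have hmap : Measure.map (fun ω => (I ω, X ω)) ℙ
        = (Measure.map I ℙ).prod (Measure.map X ℙ) :=
      (indepFun_iff_map_prod_eq_prod_map_map hI.aemeasurable hX.aemeasurable).mp hindep.symm
    have h1 : ℙ {ω | s * I ω < X ω}
        = ∫⁻ t, gammaMeasure N 1 (Ioi (s * t)) ∂(Measure.map I ℙ) := by
      rw [show {ω | s * I ω < X ω} = (fun ω => (I ω, X ω)) ⁻¹' {p : ℝ × ℝ | s * p.1 < p.2} from rfl,
        ← Measure.map_apply hm hE, hmap, Measure.prod_apply hE, hXlaw]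
      rfl
    have hfmeas : Measurable fun t : ℝ => gammaMeasure N 1 (Ioi (s * t)) := by
      have hanti : Antitone fun u : ℝ => gammaMeasure N 1 (Ioi u) :=
        fun u v huv => measure_mono (Ioi_subset_Ioi huv)
      exact hanti.measurable.comp (measurable_id.const_mul s)
    have h2 : ℙ {ω | s * I ω < X ω}
        = ∫⁻ ω, ENNReal.ofReal (Real.exp (-(s * I ω))
            * ∑ n ∈ Finset.range N, (s * I ω) ^ n / n.factorial) ∂ℙ := by
      rw [h1, lintegral_map hfmeas hI]
      refine lintegral_congr fun ω => ?_
      exact gamma_ccdf N hN (by have := hInn ω; positivity)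
    have hint2 : Integrable (fun ω => Real.exp (-(s * I ω))
        * ∑ n ∈ Finset.range N, (s * I ω) ^ n / n.factorial) := by
      refine (integrable_finset_sum (Finset.range N) fun n _ => hint n).congr ?_
      exact Filter.Eventually.of_forall fun ω => (hpt ω).symm
    rw [h2, ← ofReal_integral_eq_lintegral_ofReal hint2
      (Filter.Eventually.of_forall fun ω => by
        have h0 : (0:ℝ) ≤ I ω := hInn ω
        have h1 : (0:ℝ) ≤ ∑ n ∈ Finset.range N, (s * I ω) ^ n / n.factorial :=
          Finset.sum_nonneg fun n _ => by positivity
        positivity)]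
    rw [ENNReal.toReal_ofReal (integral_nonneg fun ω => by
        have h0 : (0:ℝ) ≤ I ω := hInn ω
        have h1 : (0:ℝ) ≤ ∑ n ∈ Finset.range N, (s * I ω) ^ n / n.factorial :=
          Finset.sum_nonneg fun n _ => by positivity
        positivity)]
    exact integral_congr_ae (Filter.Eventually.of_forall hpt)
  -- RHS
  have hRHS : ∑ n ∈ Finset.range N, s ^ n * (-1 : ℝ) ^ n / (Nat.factorial n) *
        iteratedDerivWithin n L (Set.Ioi 0) s
      = ∫ ω, ∑ n ∈ Finset.range N, s ^ n / n.factorial * (I ω ^ n * Real.exp (-s * I ω)) := by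
    rw [integral_finset_sum (Finset.range N) fun n _ => hint n]
    refine Finset.sum_congr rfl fun n _ => ?_
    rw [iterated_eq_g I hI hInn hLint L hL n s hs, ← integral_const_mul]
    refine integral_congr_ae (Filter.Eventually.of_forall fun ω => ?_)
    have : (-1 : ℝ) ^ n * (-I ω) ^ n = I ω ^ n := by
      rw [← mul_pow]; congr 1; ring
    calc s ^ n * (-1:ℝ) ^ n / n.factorial * ((-I ω) ^ n * Real.exp (-s * I ω))
        = s ^ n / n.factorial * (((-1:ℝ) ^ n * (-I ω) ^ n) * Real.exp (-s * I ω)) := by ring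
      _ = s ^ n / n.factorial * (I ω ^ n * Real.exp (-s * I ω)) := by rw [this]
  rw [hLHS, hRHS]
end

section
/- For $\tau > 0$, $\alpha > 2$, $\lambda > 0$, and $s = x^\alpha$ with $x > 0$, define $\mathcal{L}(x) = \exp\left(-\frac{2\pi\tau \lambda x^2}{\alpha - 2}\, {}_2F_1\!\left(1, 1-\tfrac{2}{\alpha}; 2-\tfrac{2}{\alpha}; -\tau\right)\right)$. Then $2\pi\lambda \int_0^{\infty} x\, e^{-\pi\lambda x^2}\, \mathcal{L}(x)\, dx = \frac{1}{1 + \frac{2\tau}{\alpha-2}\, {}_2F_1\!\left(1, 1-\tfrac{2}{\alpha}; 2-\tfrac{2}{\alpha}; -\tau\right)}$. -/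
open MeasureTheory Real

/-- The Gauss hypergeometric function ₂F₁(a,b;c;x), defined by its power series. -/
noncomputable def hyp2F1 (a b c x : ℝ) : ℝ :=
  ∑' n : ℕ, ((ascPochhammer ℝ n).eval a * (ascPochhammer ℝ n).eval b /
    (ascPochhammer ℝ n).eval c) * x ^ n / (Nat.factorial n)

private lemma aux_summand_eq (b : ℝ) (hb : 0 < b) (x : ℝ) (n : ℕ) :
    ((ascPochhammer ℝ n).eval 1 * (ascPochhammer ℝ n).eval b /
      (ascPochhammer ℝ n).eval (b+1)) * x ^ n / (Nat.factorial n)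
    = b / (b + n) * x ^ n := by
  have key : (ascPochhammer ℝ n).eval b * (b + n) = b * (ascPochhammer ℝ n).eval (b+1) := by
    have h1 : (ascPochhammer ℝ (n+1)).eval b = (ascPochhammer ℝ n).eval b * (b + n) := by
      rw [ascPochhammer_succ_right]
      simp [Polynomial.eval_mul]
    have h2 : (ascPochhammer ℝ (n+1)).eval b = b * (ascPochhammer ℝ n).eval (b+1) := by
      rw [ascPochhammer_succ_left]
      simp [Polynomial.eval_comp]
    rw [← h1, h2]
  have hp : (0:ℝ) < (ascPochhammer ℝ n).eval (b+1) := ascPochhammer_pos n _ (by linarith)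
  have hbn : (0:ℝ) < b + n := by positivity
  have hfac : ((Nat.factorial n : ℝ)) ≠ 0 := by positivity
  rw [ascPochhammer_eval_one]
  field_simp
  linear_combination x ^ n * key

private lemma aux_tsum_nonneg (b t : ℝ) (hb : 0 < b) (hb1 : b ≤ 1) (ht : 0 < t) :
    0 ≤ ∑' n : ℕ, b / (b + n) * (-t) ^ n := by
  set f : ℕ → ℝ := fun n => b / (b + n) * (-t) ^ n with hf
  have hbn : ∀ n : ℕ, (0:ℝ) < b + n := fun n => by positivity
  have habs : ∀ n : ℕ, |f n| = b / (b + n) * t ^ n := by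
    intro n
    rw [hf, abs_mul, abs_pow, abs_neg, abs_of_pos ht,
      abs_of_pos (by positivity : (0:ℝ) < b / (b + n))]
  by_cases h1 : 1 ≤ t
  · rw [tsum_eq_zero_of_not_summable]
    intro hs
    have hsa := hs.abs
    have hcomp : Summable (fun n : ℕ => b * ((n:ℝ) + 1)⁻¹) := by
      apply hsa.of_nonneg_of_le (fun n => by positivity)
      intro n
      rw [habs]
      have h2 : b * ((n:ℝ)+1)⁻¹ ≤ b / (b + n) := by
        rw [div_eq_mul_inv]
        refine mul_le_mul_of_nonneg_left ?_ hb.le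
        refine inv_anti₀ (hbn n) ?_
        linarith [Nat.cast_nonneg (α := ℝ) n]
      calc b * ((n:ℝ)+1)⁻¹ ≤ b / (b + n) := h2
        _ ≤ b / (b + n) * t ^ n :=
            le_mul_of_one_le_right (by positivity) (one_le_pow₀ h1)
    have : Summable (fun n : ℕ => ((n:ℝ) + 1)⁻¹) := by
      have := hcomp.mul_left b⁻¹
      simpa [← mul_assoc, inv_mul_cancel₀ hb.ne'] using this
    have hns : ¬ Summable (fun n : ℕ => ((n:ℝ) + 1)⁻¹) := by
      have := mt (summable_nat_add_iff (f := fun n : ℕ => ((n:ℝ))⁻¹) 1).mp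
        Real.not_summable_natCast_inv
      simpa [Nat.cast_add] using this
    exact hns this
  · push_neg at h1
    have hsum : Summable f := by
      apply Summable.of_abs
      apply (summable_geometric_of_lt_one ht.le h1).of_nonneg_of_le
        (fun n => abs_nonneg _)
      intro n
      rw [habs]
      calc b / (b + n) * t ^ n ≤ 1 * t ^ n := by
            refine mul_le_mul_of_nonneg_right ?_ (pow_nonneg ht.le n)
            rw [div_le_one (hbn n)]; linarith [Nat.cast_nonneg (α := ℝ) n]
        _ = t ^ n := one_mul _
    have he : Summable fun k => f (2 * k) := hsum.comp_injective (mul_right_injective₀ two_ne_zero)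
    have ho : Summable fun k => f (2 * k + 1) :=
      hsum.comp_injective (fun a b h => by omega)
    rw [← tsum_even_add_odd he ho, ← Summable.tsum_add he ho]
    apply tsum_nonneg
    intro k
    have e1 : (-t) ^ (2 * k) = t ^ (2 * k) := by
      rw [neg_pow, pow_mul, neg_one_sq, one_pow, one_mul]
    have e2 : (-t) ^ (2 * k + 1) = -(t ^ (2 * k + 1)) := by
      rw [pow_succ, neg_pow, pow_mul, neg_one_sq, one_pow, one_mul, pow_succ]
      ring
    simp only [hf, e1, e2]
    have key : b / (b + (2*k+1 : ℕ)) * t ^ (2*k+1) ≤ b / (b + (2*k : ℕ)) * t ^ (2*k) := by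
      rw [pow_succ]
      push_cast
      calc b / (b + (2*(k:ℝ)+1)) * (t ^ (2*k) * t) ≤ b / (b + 2*(k:ℝ)) * (t ^ (2*k) * 1) := by
            refine mul_le_mul ?_ ?_ (by positivity) (by positivity)
            · apply div_le_div_of_nonneg_left hb.le (by positivity) (by linarith)
            · exact mul_le_mul_of_nonneg_left h1.le (by positivity)
        _ = b / (b + 2*(k:ℝ)) * t ^ (2*k) := by ring
    push_cast at key ⊢
    linarith

private lemma aux_integral (a : ℝ) (ha : 0 < a) :
    ∫ x in Set.Ioi (0:ℝ), x * Real.exp (-a * x^2) = (2*a)⁻¹ := by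
  have h := integral_Ioi_of_hasDerivAt_of_tendsto'
    (f := fun x => -(2*a)⁻¹ * Real.exp (-a * x^2))
    (f' := fun x => x * Real.exp (-a * x^2)) (a := 0) (m := 0)
    (fun x _ => by
      have := (((hasDerivAt_pow 2 x).const_mul (-a)).exp.const_mul (-(2*a)⁻¹))
      convert this using 1
      · rfl
      · field_simp
        ring)
    (integrable_mul_exp_neg_mul_sq ha).integrableOn
    ?_
  · rw [h]; simp
  · have : Filter.Tendsto (fun x:ℝ => -a * x^2) Filter.atTop Filter.atBot := by
      apply Filter.Tendsto.const_mul_atTop_of_neg (by linarith)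
      exact Filter.tendsto_pow_atTop (by norm_num)
    have h2 := (Real.tendsto_exp_atBot.comp this).const_mul (-(2*a)⁻¹)
    simpa using h2

theorem single_tier_coverage_closed_form (tau alpha lam : ℝ)
    (htau : 0 < tau) (ha : 2 < alpha) (hlam : 0 < lam) :
    let L : ℝ → ℝ := fun x =>
      Real.exp (-(2 * π * tau * lam * x ^ 2 / (alpha - 2)) *
        hyp2F1 1 (1 - 2 / alpha) (2 - 2 / alpha) (-tau))
    2 * π * lam * ∫ x in Set.Ioi (0:ℝ), x * Real.exp (-π * lam * x ^ 2) * L x =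
      1 / (1 + (2 * tau / (alpha - 2)) *
        hyp2F1 1 (1 - 2 / alpha) (2 - 2 / alpha) (-tau)) := by
  intro L
  have halpha : (0:ℝ) < alpha := by linarith
  set b : ℝ := 1 - 2 / alpha with hbdef
  have hb : 0 < b := by
    have : 2 / alpha < 1 := (div_lt_one halpha).mpr ha
    simp only [hbdef]; linarith
  have hb1 : b ≤ 1 := by
    have : 0 ≤ 2 / alpha := by positivity
    simp only [hbdef]; linarith
  have hc : 2 - 2 / alpha = b + 1 := by simp only [hbdef]; ring
  have hFeq : hyp2F1 1 (1 - 2 / alpha) (2 - 2 / alpha) (-tau)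
      = ∑' n : ℕ, b / (b + n) * (-tau) ^ n := by
    rw [hc, hyp2F1]
    exact tsum_congr fun n => aux_summand_eq b hb (-tau) n
  have hF : 0 ≤ hyp2F1 1 (1 - 2 / alpha) (2 - 2 / alpha) (-tau) := by
    rw [hFeq]; exact aux_tsum_nonneg b tau hb hb1 htau
  set F : ℝ := hyp2F1 1 (1 - 2 / alpha) (2 - 2 / alpha) (-tau) with hFdef
  set t : ℝ := 2 * tau / (alpha - 2) * F with htdef
  have ht : 0 ≤ t := by
    apply mul_nonneg _ hF
    have h2 : (0:ℝ) < alpha - 2 := by linarith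
    positivity
  have hpl : (0:ℝ) < π * lam * (1 + t) := by
    have := Real.pi_pos
    have h1t : (0:ℝ) < 1 + t := by linarith
    positivity
  have hintegrand : (fun x : ℝ => x * Real.exp (-π * lam * x ^ 2) * L x)
      = fun x : ℝ => x * Real.exp (-(π * lam * (1 + t)) * x ^ 2) := by
    funext x
    show x * Real.exp (-π * lam * x ^ 2) *
      Real.exp (-(2 * π * tau * lam * x ^ 2 / (alpha - 2)) * F) = _
    rw [mul_assoc, ← Real.exp_add]
    congr 1
    simp only [htdef]
    field_simp
    ring
  rw [hintegrand, aux_integral _ hpl]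
  have hpi := Real.pi_pos
  have h1t : (0:ℝ) < 1 + t := by linarith
  rw [show 1 + 2 * tau / (alpha - 2) * F = 1 + t from rfl]
  field_simp
end
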